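/- Let c > 1/2 and δ > 0 be fixed. For k ≥ 1 define a_k = 2^k · Σ_{P ∈ 𝒫(k)} 2^{−#P} · δ^{#P − 2kc} · ∏_{B ∈ P} 1/(2c·#B − 1). If μ and ν are Borel probability measures on ℝ, each supported on the nonnegative real line, such that for every k ≥ 1 the k-th moments exist and satisfy ∫ x^k dμ(x) = a_k and ∫ x^k dν(x) = a_k, then μ = ν. (In other words, the moment sequence (a_k)_{k≥1} determines a unique probability measure on the positive real line.) -/

import Mathlib

open MeasureTheory

/-- A finite collection `Q` of subsets of `{1,…,k}` is a set partition of `{1,…,k}` if its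
blocks are nonempty and every element lies in exactly one block. -/
def IsSetPartition {k : ℕ} (Q : Finset (Finset (Fin k))) : Prop :=
  (∀ B ∈ Q, B.Nonempty) ∧ ∀ x : Fin k, ∃! B, B ∈ Q ∧ x ∈ B

open scoped Classical in
/-- The moment `a_k = 2^k ∑_{P ∈ 𝒫(k)} 2^{-#P} δ^{#P - 2kc} ∏_{B ∈ P} (2c·#B - 1)⁻¹` of the
truncated random Dirichlet series `T(c,δ)`. -/
noncomputable def truncMoment (c δ : ℝ) (k : ℕ) : ℝ :=
  2 ^ k * ∑ Q : Finset (Finset (Fin k)),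
    if IsSetPartition Q then
      ((2 : ℝ) ^ Q.card)⁻¹ * δ ^ ((Q.card : ℝ) - 2 * k * c) *
        ∏ B ∈ Q, 1 / (2 * c * (B.card : ℝ) - 1)
    else 0

section Combinatorics
variable {k : ℕ}

lemma isSetPartition_card_le {Q : Finset (Finset (Fin k))} (hQ : IsSetPartition Q) :
    Q.card ≤ k := by
  classical
  have hdisj : ∀ B ∈ Q, ∀ B' ∈ Q, B ≠ B' → Disjoint B B' := by
    intro B hB B' hB' hne
    rw [Finset.disjoint_left]
    intro x hx hx'
    obtain ⟨C, _, hCuniq⟩ := hQ.2 x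
    exact hne ((hCuniq B ⟨hB, hx⟩).trans (hCuniq B' ⟨hB', hx'⟩).symm)
  calc Q.card = ∑ _B ∈ Q, 1 := by simp
    _ ≤ ∑ B ∈ Q, B.card := Finset.sum_le_sum fun B hB => Finset.card_pos.2 (hQ.1 B hB)
    _ = (Q.biUnion id).card := (Finset.card_biUnion hdisj).symm
    _ ≤ (Finset.univ : Finset (Fin k)).card := Finset.card_le_card (Finset.subset_univ _)
    _ = k := by simp

open scoped Classical in
noncomputable def blockOf (Q : Finset (Finset (Fin k))) (hQ : IsSetPartition Q) (x : Fin k) :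
    Finset (Fin k) :=
  Finset.choose (fun B => x ∈ B) Q (hQ.2 x)

lemma blockOf_mem {Q : Finset (Finset (Fin k))} (hQ : IsSetPartition Q) (x : Fin k) :
    blockOf Q hQ x ∈ Q := by unfold blockOf; exact Finset.choose_mem _ _ _

lemma mem_blockOf {Q : Finset (Finset (Fin k))} (hQ : IsSetPartition Q) (x : Fin k) :
    x ∈ blockOf Q hQ x := by
  classical
  unfold blockOf
  exact Finset.choose_property (fun B => x ∈ B) Q (hQ.2 x)

lemma blockOf_eq {Q : Finset (Finset (Fin k))} (hQ : IsSetPartition Q) {x : Fin k}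
    {B : Finset (Fin k)} (hB : B ∈ Q) (hx : x ∈ B) : blockOf Q hQ x = B := by
  obtain ⟨C, _, hCuniq⟩ := hQ.2 x
  exact (hCuniq _ ⟨blockOf_mem hQ x, mem_blockOf hQ x⟩).trans (hCuniq B ⟨hB, hx⟩).symm

lemma blockOf_nonempty {Q : Finset (Finset (Fin k))} (hQ : IsSetPartition Q) (x : Fin k) :
    (blockOf Q hQ x).Nonempty := hQ.1 _ (blockOf_mem hQ x)

/-- the "min of block" function attached to a partition -/
noncomputable def minMap (Q : Finset (Finset (Fin k))) (hQ : IsSetPartition Q) (x : Fin k) :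
    Fin k := (blockOf Q hQ x).min' (blockOf_nonempty hQ x)

lemma subset_of_minMap_eq {Q Q' : Finset (Finset (Fin k))} (hQ : IsSetPartition Q)
    (hQ' : IsSetPartition Q') (hφ : ∀ x, minMap Q hQ x = minMap Q' hQ' x)
    {B B' : Finset (Fin k)} (hB : B ∈ Q) (hB' : B' ∈ Q') {x : Fin k}
    (hxB : x ∈ B) (hxB' : x ∈ B') : B ⊆ B' := by
  intro y hy
  have h1 : blockOf Q hQ y = B := blockOf_eq hQ hB hy
  have h2 : blockOf Q hQ x = B := blockOf_eq hQ hB hxB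
  have h3 : blockOf Q' hQ' x = B' := blockOf_eq hQ' hB' hxB'
  have hmin : (blockOf Q' hQ' y).min' (blockOf_nonempty hQ' y)
      = B'.min' (hQ'.1 _ hB') := by
    have e1 := hφ y
    have e2 := hφ x
    unfold minMap at e1 e2
    simp only [h1, h2, h3] at e1 e2
    rw [← e1, e2]
  set z : Fin k := B'.min' (hQ'.1 _ hB') with hz
  have hz1 : z ∈ blockOf Q' hQ' y := by
    rw [← hmin]; exact Finset.min'_mem _ _
  have hz2 : z ∈ B' := Finset.min'_mem _ _
  have : blockOf Q' hQ' y = B' := by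
    rw [← blockOf_eq hQ' (blockOf_mem hQ' y) hz1, blockOf_eq hQ' hB' hz2]
  rw [← this]
  exact mem_blockOf hQ' y

lemma isSetPartition_eq_of_minMap_eq {Q Q' : Finset (Finset (Fin k))} (hQ : IsSetPartition Q)
    (hQ' : IsSetPartition Q') (hφ : ∀ x, minMap Q hQ x = minMap Q' hQ' x) : Q = Q' := by
  have key : ∀ (R R' : Finset (Finset (Fin k))) (hR : IsSetPartition R) (hR' : IsSetPartition R'),
      (∀ x, minMap R hR x = minMap R' hR' x) → R ⊆ R' := by
    intro R R' hR hR' hψ B hB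
    obtain ⟨x, hx⟩ := hR.1 B hB
    have hB' := blockOf_mem hR' x
    have h1 : B ⊆ blockOf R' hR' x :=
      subset_of_minMap_eq hR hR' hψ hB hB' hx (mem_blockOf hR' x)
    have h2 : blockOf R' hR' x ⊆ B :=
      subset_of_minMap_eq hR' hR (fun y => (hψ y).symm) hB' hB (mem_blockOf hR' x) hx
    rw [Finset.Subset.antisymm h1 h2]
    exact hB'
  exact Finset.Subset.antisymm (key _ _ hQ hQ' hφ) (key _ _ hQ' hQ fun x => (hφ x).symm)

open scoped Classical in
lemma card_partitions_le (k : ℕ) :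
    (Finset.univ.filter fun Q : Finset (Finset (Fin k)) => IsSetPartition Q).card ≤ k ^ k := by
  classical
  have : (Finset.univ.filter fun Q : Finset (Finset (Fin k)) => IsSetPartition Q).card
      ≤ (Finset.univ : Finset (Fin k → Fin k)).card := by
    apply Finset.card_le_card_of_injOn
      (fun Q => if h : IsSetPartition Q then minMap Q h else id)
    · intro _ _; exact Finset.mem_univ _
    · intro Q hQmem Q' hQ'mem hfeq
      simp only [Finset.coe_filter, Set.mem_setOf_eq, Finset.mem_univ, true_and] at hQmem hQ'mem
      simp only [dif_pos hQmem, dif_pos hQ'mem] at hfeq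
      exact isSetPartition_eq_of_minMap_eq hQmem hQ'mem fun x => congrFun hfeq x
  simpa using this

end Combinatorics

section Bound
variable {c δ : ℝ}

lemma term_le (hc : 1 / 2 < c) (hδ : 0 < δ) {k : ℕ} {Q : Finset (Finset (Fin k))}
    (hQ : IsSetPartition Q) :
    ((2 : ℝ) ^ Q.card)⁻¹ * δ ^ ((Q.card : ℝ) - 2 * k * c) *
        ∏ B ∈ Q, 1 / (2 * c * (B.card : ℝ) - 1)
      ≤ (max 1 δ * δ ^ (-(2 * c)) * max 1 (1 / (2 * c - 1))) ^ k := by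
  have h2c : 0 < 2 * c - 1 := by linarith
  have hq : Q.card ≤ k := isSetPartition_card_le hQ
  have h1 : ((2 : ℝ) ^ Q.card)⁻¹ ≤ 1 := by
    rw [inv_le_one_iff₀]
    right
    exact one_le_pow₀ (by norm_num)
  have h2 : δ ^ ((Q.card : ℝ) - 2 * k * c) ≤ (max 1 δ) ^ k * (δ ^ (-(2 * c))) ^ k := by
    rw [sub_eq_add_neg, Real.rpow_add hδ]
    have e1 : δ ^ ((Q.card : ℝ)) ≤ (max 1 δ) ^ k := by
      rw [Real.rpow_natCast]
      calc δ ^ Q.card ≤ (max 1 δ) ^ Q.card :=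
            pow_le_pow_left₀ hδ.le (le_max_right _ _) _
        _ ≤ (max 1 δ) ^ k := pow_le_pow_right₀ (le_max_left _ _) hq
    have e2 : δ ^ (-(2 * (k : ℝ) * c)) = (δ ^ (-(2 * c))) ^ k := by
      rw [← Real.rpow_natCast (δ ^ (-(2 * c))) k, ← Real.rpow_mul hδ.le]
      ring_nf
    rw [e2]
    exact mul_le_mul_of_nonneg_right e1 (by positivity)
  have h3 : ∏ B ∈ Q, 1 / (2 * c * (B.card : ℝ) - 1) ≤ (max 1 (1 / (2 * c - 1))) ^ k := by
    have hfac : ∀ B ∈ Q, 0 < 2 * c * (B.card : ℝ) - 1 := by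
      intro B hB
      have h1B : (1 : ℝ) ≤ (B.card : ℝ) := by
        exact_mod_cast Finset.card_pos.2 (hQ.1 B hB)
      nlinarith
    calc ∏ B ∈ Q, 1 / (2 * c * (B.card : ℝ) - 1)
        ≤ ∏ _B ∈ Q, max 1 (1 / (2 * c - 1)) := by
          apply Finset.prod_le_prod
          · intro B hB
            have := hfac B hB
            positivity
          · intro B hB
            refine le_trans ?_ (le_max_right _ _)
            apply one_div_le_one_div_of_le h2c
            have h1B : (1 : ℝ) ≤ (B.card : ℝ) := by
              exact_mod_cast Finset.card_pos.2 (hQ.1 B hB)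
            nlinarith
      _ = (max 1 (1 / (2 * c - 1))) ^ Q.card := Finset.prod_const _
      _ ≤ (max 1 (1 / (2 * c - 1))) ^ k := pow_le_pow_right₀ (le_max_left _ _) hq
  have hprod_nonneg : 0 ≤ ∏ B ∈ Q, 1 / (2 * c * (B.card : ℝ) - 1) := by
    apply Finset.prod_nonneg
    intro B hB
    have h1B : (1 : ℝ) ≤ (B.card : ℝ) := by
      exact_mod_cast Finset.card_pos.2 (hQ.1 B hB)
    have : 0 < 2 * c * (B.card : ℝ) - 1 := by nlinarith
    positivity
  calc ((2 : ℝ) ^ Q.card)⁻¹ * δ ^ ((Q.card : ℝ) - 2 * k * c) *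
        ∏ B ∈ Q, 1 / (2 * c * (B.card : ℝ) - 1)
      ≤ 1 * ((max 1 δ) ^ k * (δ ^ (-(2 * c))) ^ k) * (max 1 (1 / (2 * c - 1))) ^ k := by
        apply mul_le_mul _ h3 hprod_nonneg (by positivity)
        exact mul_le_mul h1 h2 (Real.rpow_nonneg hδ.le _) zero_le_one
    _ = (max 1 δ * δ ^ (-(2 * c)) * max 1 (1 / (2 * c - 1))) ^ k := by
        rw [mul_pow, mul_pow, one_mul]

lemma truncMoment_le (hc : 1 / 2 < c) (hδ : 0 < δ) (k : ℕ) :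
    truncMoment c δ k
      ≤ (2 * (max 1 δ * δ ^ (-(2 * c)) * max 1 (1 / (2 * c - 1)))) ^ k * (k : ℝ) ^ k := by
  classical
  set D : ℝ := max 1 δ * δ ^ (-(2 * c)) * max 1 (1 / (2 * c - 1)) with hD
  have hD0 : 0 < D := by
    have : (0:ℝ) < max 1 δ := lt_max_of_lt_left one_pos
    have : (0:ℝ) < δ ^ (-(2 * c)) := Real.rpow_pos_of_pos hδ _
    have : (0:ℝ) < max 1 (1 / (2 * c - 1)) := lt_max_of_lt_left one_pos
    positivity
  have hsum : (∑ Q : Finset (Finset (Fin k)),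
      if IsSetPartition Q then
        ((2 : ℝ) ^ Q.card)⁻¹ * δ ^ ((Q.card : ℝ) - 2 * k * c) *
          ∏ B ∈ Q, 1 / (2 * c * (B.card : ℝ) - 1)
      else 0) ≤ (k : ℝ) ^ k * D ^ k := by
    rw [← Finset.sum_filter]
    calc (∑ Q ∈ Finset.univ.filter fun Q : Finset (Finset (Fin k)) => IsSetPartition Q,
          ((2 : ℝ) ^ Q.card)⁻¹ * δ ^ ((Q.card : ℝ) - 2 * k * c) *
            ∏ B ∈ Q, 1 / (2 * c * (B.card : ℝ) - 1))
        ≤ ∑ Q ∈ Finset.univ.filter fun Q : Finset (Finset (Fin k)) => IsSetPartition Q, D ^ k := by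
          apply Finset.sum_le_sum
          intro Q hQ
          exact term_le hc hδ (Finset.mem_filter.1 hQ).2
      _ = ((Finset.univ.filter fun Q : Finset (Finset (Fin k)) => IsSetPartition Q).card : ℝ)
            * D ^ k := by rw [Finset.sum_const, nsmul_eq_mul]
      _ ≤ (k : ℝ) ^ k * D ^ k := by
          apply mul_le_mul_of_nonneg_right _ (by positivity)
          calc ((Finset.univ.filter fun Q : Finset (Finset (Fin k)) => IsSetPartition Q).card : ℝ)
              ≤ ((k ^ k : ℕ) : ℝ) := by exact_mod_cast card_partitions_le k
            _ = (k : ℝ) ^ k := by push_cast; ring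
  calc truncMoment c δ k ≤ 2 ^ k * ((k : ℝ) ^ k * D ^ k) := by
        unfold truncMoment
        exact mul_le_mul_of_nonneg_left hsum (by positivity)
    _ = (2 * D) ^ k * (k : ℝ) ^ k := by rw [mul_pow]; ring

lemma pow_le_exp_mul_factorial (k : ℕ) :
    (k : ℝ) ^ k ≤ Real.exp 1 ^ k * k.factorial := by
  have h1 : (k : ℝ) ^ k / k.factorial ≤ Real.exp k := by
    refine le_trans ?_ (Real.sum_le_exp_of_nonneg (by positivity) (k + 1))
    exact Finset.single_le_sum (f := fun i => (k : ℝ) ^ i / i.factorial)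
      (fun i _ => by positivity) (Finset.self_mem_range_succ k)
  rw [Real.exp_one_pow]
  have hf : (0 : ℝ) < k.factorial := by exact_mod_cast k.factorial_pos
  rw [div_le_iff₀ hf] at h1
  linarith [h1]

lemma truncMoment_le_factorial (hc : 1 / 2 < c) (hδ : 0 < δ) (k : ℕ) :
    truncMoment c δ k
      ≤ (Real.exp 1 * (2 * (max 1 δ * δ ^ (-(2 * c)) * max 1 (1 / (2 * c - 1))))) ^ k
          * k.factorial := by
  set D : ℝ := 2 * (max 1 δ * δ ^ (-(2 * c)) * max 1 (1 / (2 * c - 1))) with hD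
  have hD0 : 0 < D := by
    have h1 : (0:ℝ) < max 1 δ := lt_max_of_lt_left one_pos
    have h2 : (0:ℝ) < δ ^ (-(2 * c)) := Real.rpow_pos_of_pos hδ _
    have h3 : (0:ℝ) < max 1 (1 / (2 * c - 1)) := lt_max_of_lt_left one_pos
    positivity
  calc truncMoment c δ k ≤ D ^ k * (k : ℝ) ^ k := truncMoment_le hc hδ k
    _ ≤ D ^ k * (Real.exp 1 ^ k * k.factorial) :=
        mul_le_mul_of_nonneg_left (pow_le_exp_mul_factorial k) (by positivity)
    _ = (Real.exp 1 * D) ^ k * k.factorial := by rw [mul_pow]; ring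

end Bound

section Analysis
open Real Filter
open scoped ENNReal NNReal

variable {μ : Measure ℝ}

lemma ae_nonneg_of_Iio (hμ0 : μ (Set.Iio 0) = 0) : ∀ᵐ x ∂μ, 0 ≤ x := by
  rw [ae_iff]
  convert hμ0 using 2
  ext x
  simp [not_le]

lemma ae_pow_nonneg (h0 : ∀ᵐ x ∂μ, 0 ≤ x) (k : ℕ) : ∀ᵐ x ∂μ, 0 ≤ x ^ k := by
  filter_upwards [h0] with x hx using pow_nonneg hx k

/-- each term's `lintegral` in the exponential series -/
lemma lintegral_term (h0 : ∀ᵐ x ∂μ, 0 ≤ x)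
    (hint : ∀ k : ℕ, Integrable (fun x : ℝ => x ^ k) μ) (s : ℝ) (hs : 0 ≤ s) (k : ℕ) :
    ∫⁻ x, ENNReal.ofReal (s ^ k * x ^ k / k.factorial) ∂μ
      = ENNReal.ofReal (s ^ k * (∫ x, x ^ k ∂μ) / k.factorial) := by
  have hm : Measurable fun x : ℝ => ENNReal.ofReal (x ^ k) := by measurability
  have hc : (0:ℝ) ≤ s ^ k / k.factorial := by positivity
  calc ∫⁻ x, ENNReal.ofReal (s ^ k * x ^ k / k.factorial) ∂μ
      = ∫⁻ x, ENNReal.ofReal (s ^ k / k.factorial) * ENNReal.ofReal (x ^ k) ∂μ := by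
        apply lintegral_congr fun x => ?_
        rw [← ENNReal.ofReal_mul hc]
        ring_nf
    _ = ENNReal.ofReal (s ^ k / k.factorial) * ∫⁻ x, ENNReal.ofReal (x ^ k) ∂μ :=
        lintegral_const_mul _ hm
    _ = ENNReal.ofReal (s ^ k / k.factorial) * ENNReal.ofReal (∫ x, x ^ k ∂μ) := by
        rw [ofReal_integral_eq_lintegral_ofReal (hint k) (ae_pow_nonneg h0 k)]
    _ = ENNReal.ofReal (s ^ k * (∫ x, x ^ k ∂μ) / k.factorial) := by
        rw [← ENNReal.ofReal_mul hc]
        congr 1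
        ring

lemma tsum_term_lt_top [IsProbabilityMeasure μ] (h0 : ∀ᵐ x ∂μ, 0 ≤ x)
    (hint : ∀ k : ℕ, Integrable (fun x : ℝ => x ^ k) μ)
    {C : ℝ} (hC : 0 < C) (hb : ∀ k : ℕ, ∫ x, x ^ k ∂μ ≤ C ^ k * k.factorial)
    {s : ℝ} (hs0 : 0 ≤ s) (hs : s * C < 1) :
    (∑' k : ℕ, ∫⁻ x, ENNReal.ofReal (s ^ k * x ^ k / k.factorial) ∂μ) < ⊤ := by
  have hle : ∀ k : ℕ, ∫⁻ x, ENNReal.ofReal (s ^ k * x ^ k / k.factorial) ∂μ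
      ≤ ENNReal.ofReal (s * C) ^ k := fun k => by
    rw [lintegral_term h0 hint s hs0 k, ← ENNReal.ofReal_pow (by positivity)]
    apply ENNReal.ofReal_le_ofReal
    have hf : (0:ℝ) < k.factorial := by exact_mod_cast k.factorial_pos
    rw [div_le_iff₀ hf, mul_pow]
    have h1 : s ^ k * (∫ x, x ^ k ∂μ) ≤ s ^ k * (C ^ k * k.factorial) :=
      mul_le_mul_of_nonneg_left (hb k) (by positivity)
    linarith
  calc (∑' k : ℕ, ∫⁻ x, ENNReal.ofReal (s ^ k * x ^ k / k.factorial) ∂μ)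
      ≤ ∑' k : ℕ, ENNReal.ofReal (s * C) ^ k := ENNReal.tsum_le_tsum hle
    _ = (1 - ENNReal.ofReal (s * C))⁻¹ := ENNReal.tsum_geometric _
    _ < ⊤ := by
        rw [ENNReal.inv_lt_top]
        exact tsub_pos_of_lt (ENNReal.ofReal_lt_one.2 hs)

lemma exp_eq_tsum_series (y : ℝ) : Real.exp y = ∑' k : ℕ, y ^ k / k.factorial := by
  rw [Real.exp_eq_exp_ℝ, NormedSpace.exp_eq_tsum_div]

lemma integrable_exp_mul [IsProbabilityMeasure μ] (h0 : ∀ᵐ x ∂μ, 0 ≤ x)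
    (hint : ∀ k : ℕ, Integrable (fun x : ℝ => x ^ k) μ)
    {C : ℝ} (hC : 0 < C) (hb : ∀ k : ℕ, ∫ x, x ^ k ∂μ ≤ C ^ k * k.factorial)
    {t : ℝ} (ht : t < 1 / (2 * C)) : Integrable (fun x : ℝ => Real.exp (t * x)) μ := by
  refine ⟨(Real.continuous_exp.comp (continuous_const.mul continuous_id)).aestronglyMeasurable, ?_⟩
  rw [hasFiniteIntegral_iff_norm]
  rcases le_or_gt t 0 with htneg | htpos
  · -- bounded by 1
    calc ∫⁻ x, ENNReal.ofReal ‖Real.exp (t * x)‖ ∂μ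
        ≤ ∫⁻ _x, (1 : ℝ≥0∞) ∂μ := by
          apply lintegral_mono_ae
          filter_upwards [h0] with x hx
          rw [Real.norm_of_nonneg (Real.exp_pos _).le, ← ENNReal.ofReal_one]
          exact ENNReal.ofReal_le_ofReal
            (Real.exp_le_one_iff.2 (mul_nonpos_of_nonpos_of_nonneg htneg hx))
      _ < ⊤ := by simp
  · -- use the series bound with s = t
    have hs : t * C < 1 := by
      rw [lt_div_iff₀ (by positivity)] at ht
      nlinarith
    have key : ∫⁻ x, ENNReal.ofReal ‖Real.exp (t * x)‖ ∂μ
        ≤ ∑' k : ℕ, ∫⁻ x, ENNReal.ofReal (t ^ k * x ^ k / k.factorial) ∂μ := by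
      rw [← lintegral_tsum (fun k => by fun_prop)]
      apply lintegral_mono_ae
      filter_upwards [h0] with x hx
      rw [Real.norm_of_nonneg (Real.exp_pos _).le]
      have hexp : Real.exp (t * x) = ∑' k : ℕ, t ^ k * x ^ k / k.factorial := by
        rw [exp_eq_tsum_series]
        congr 1
        ext k
        rw [mul_pow]
      have hsumm : Summable fun k : ℕ => t ^ k * x ^ k / k.factorial :=
        (Real.summable_pow_div_factorial (t * x)).congr fun k => by rw [mul_pow]
      rw [hexp, ENNReal.ofReal_tsum_of_nonneg (fun k => by positivity) hsumm]
    exact lt_of_le_of_lt key (tsum_term_lt_top h0 hint hC hb htpos.le hs)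

lemma integral_exp_mul_eq_tsum [IsProbabilityMeasure μ] (h0 : ∀ᵐ x ∂μ, 0 ≤ x)
    (hint : ∀ k : ℕ, Integrable (fun x : ℝ => x ^ k) μ)
    {C : ℝ} (hC : 0 < C) (hb : ∀ k : ℕ, ∫ x, x ^ k ∂μ ≤ C ^ k * k.factorial)
    {t : ℝ} (ht : |t| < 1 / (2 * C)) :
    ∫ x, Real.exp (t * x) ∂μ = ∑' k : ℕ, t ^ k * (∫ x, x ^ k ∂μ) / k.factorial := by
  have habs : |t| * C < 1 := by
    rw [lt_div_iff₀ (by positivity)] at ht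
    nlinarith [abs_nonneg t]
  have hmeas : ∀ k : ℕ, AEStronglyMeasurable (fun x : ℝ => t ^ k * x ^ k / k.factorial) μ := by
    intro k
    exact ((continuous_const.mul (continuous_pow k)).div_const _).aestronglyMeasurable
  have hlint : (∑' k : ℕ, ∫⁻ x, ‖t ^ k * x ^ k / k.factorial‖₊ ∂μ) ≠ ⊤ := by
    have heqk : ∀ k : ℕ, (∫⁻ x, ‖t ^ k * x ^ k / k.factorial‖₊ ∂μ)
        = ∫⁻ x, ENNReal.ofReal (|t| ^ k * x ^ k / k.factorial) ∂μ := by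
      intro k
      apply lintegral_congr_ae
      filter_upwards [h0] with x hx
      rw [← enorm_eq_nnnorm, ← ofReal_norm]
      congr 1
      rw [norm_div, norm_mul, norm_pow, norm_pow, Real.norm_of_nonneg hx,
        Real.norm_natCast, Real.norm_eq_abs]
    rw [tsum_congr heqk]
    exact (tsum_term_lt_top h0 hint hC hb (abs_nonneg t)
      habs).ne
  have hpt : ∀ x : ℝ, (∑' k : ℕ, t ^ k * x ^ k / k.factorial) = Real.exp (t * x) := by
    intro x
    rw [exp_eq_tsum_series]
    congr 1
    ext k
    rw [mul_pow]
  calc ∫ x, Real.exp (t * x) ∂μ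
      = ∫ x, ∑' k : ℕ, t ^ k * x ^ k / k.factorial ∂μ := by
        apply integral_congr_ae
        filter_upwards with x
        exact (hpt x).symm
    _ = ∑' k : ℕ, ∫ x, t ^ k * x ^ k / k.factorial ∂μ := integral_tsum hmeas hlint
    _ = ∑' k : ℕ, t ^ k * (∫ x, x ^ k ∂μ) / k.factorial := by
        apply tsum_congr
        intro k
        calc ∫ x, t ^ k * x ^ k / k.factorial ∂μ
            = ∫ x, (t ^ k / k.factorial) * x ^ k ∂μ := by
              apply integral_congr_ae
              filter_upwards with x
              ring
          _ = (t ^ k / k.factorial) * ∫ x, x ^ k ∂μ := integral_const_mul _ _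
          _ = t ^ k * (∫ x, x ^ k ∂μ) / k.factorial := by ring

end Analysis

section Complex
open Real Filter Metric
open scoped Topology ENNReal

variable {μ ν : Measure ℝ}

lemma complex_norm_exp_neg (z : ℂ) (x : ℝ) :
    ‖Complex.exp (-(z * x))‖ = Real.exp (-(z.re * x)) := by
  rw [Complex.norm_exp]
  congr 1
  simp

lemma integrable_cexp {r : ℝ} (hr : 0 < r)
    (h0 : ∀ᵐ x ∂μ, 0 ≤ x)
    (hμint : ∀ t : ℝ, t < r → Integrable (fun x : ℝ => Real.exp (t * x)) μ)
    {z : ℂ} (hz : -(r / 2) < z.re) :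
    Integrable (fun x : ℝ => Complex.exp (-(z * x))) μ := by
  apply Integrable.mono' (hμint (r / 2) (by linarith))
  · apply Continuous.aestronglyMeasurable
    continuity
  · filter_upwards [h0] with x hx
    rw [complex_norm_exp_neg]
    apply Real.exp_le_exp.2
    nlinarith

lemma differentiableOn_laplace {r : ℝ} (hr : 0 < r)
    (h0 : ∀ᵐ x ∂μ, 0 ≤ x)
    (hμint : ∀ t : ℝ, t < r → Integrable (fun x : ℝ => Real.exp (t * x)) μ) :
    DifferentiableOn ℂ (fun z : ℂ => ∫ x, Complex.exp (-(z * x)) ∂μ)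
      {z : ℂ | -(r / 2) < z.re} := by
  intro z₀ hz₀
  simp only [Set.mem_setOf_eq] at hz₀
  set ε : ℝ := (z₀.re + r / 2) / 2 with hε
  have hεpos : 0 < ε := by simp only [hε]; linarith
  set s : ℝ := -(z₀.re - ε) + r / 4 with hs
  have hsr : s < r := by
    simp only [hs, hε]
    linarith
  have key := hasDerivAt_integral_of_dominated_loc_of_deriv_le (μ := μ)
    (F := fun (z : ℂ) (x : ℝ) => Complex.exp (-(z * x)))
    (F' := fun (z : ℂ) (x : ℝ) => -(x : ℂ) * Complex.exp (-(z * x)))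
    (x₀ := z₀) (bound := fun x : ℝ => (4 / r) * Real.exp (s * x)) (Metric.ball_mem_nhds z₀ hεpos)
    ?_ ?_ ?_ ?_ ?_ ?_
  · exact ((key.2.differentiableAt).differentiableWithinAt)
  · filter_upwards with z
    apply Continuous.aestronglyMeasurable
    continuity
  · exact integrable_cexp hr h0 hμint hz₀
  · apply Continuous.aestronglyMeasurable
    continuity
  · filter_upwards [h0] with x hx
    intro z hz
    have hzre : z₀.re - ε < z.re := by
      have h1 : |(z - z₀).re| ≤ ‖z - z₀‖ := Complex.abs_re_le_norm _
      rw [mem_ball, Complex.dist_eq] at hz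
      have h2 : |z.re - z₀.re| < ε := by
        rw [Complex.sub_re] at h1
        exact lt_of_le_of_lt h1 hz
      have := abs_lt.1 h2
      linarith [this.1]
    rw [norm_mul, norm_neg, Complex.norm_real, Real.norm_of_nonneg hx,
      complex_norm_exp_neg]
    have hx4 : x ≤ (4 / r) * Real.exp (r / 4 * x) := by
      have h1 : r / 4 * x ≤ Real.exp (r / 4 * x) := by
        have := Real.add_one_le_exp (r / 4 * x)
        linarith
      calc x = (4 / r) * (r / 4 * x) := by field_simp
        _ ≤ (4 / r) * Real.exp (r / 4 * x) := mul_le_mul_of_nonneg_left h1 (by positivity)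
    calc x * Real.exp (-(z.re * x))
        ≤ ((4 / r) * Real.exp (r / 4 * x)) * Real.exp (-(z.re * x)) := by
          apply mul_le_mul_of_nonneg_right hx4 (Real.exp_pos _).le
      _ = (4 / r) * Real.exp (r / 4 * x + -(z.re * x)) := by
          rw [mul_assoc, ← Real.exp_add]
      _ ≤ (4 / r) * Real.exp (s * x) := by
          apply mul_le_mul_of_nonneg_left _ (by positivity)
          apply Real.exp_le_exp.2
          simp only [hs]
          nlinarith
  · exact (hμint s hsr).const_mul _
  · filter_upwards with x
    intro z hz
    have h1 : HasDerivAt (fun w : ℂ => -(w * x)) (-(x : ℂ)) z := by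
      have := (hasDerivAt_id z).mul_const (x : ℂ)
      exact this.neg.congr_deriv (by simp)
    have := h1.cexp
    simpa [mul_comm] using this

lemma laplace_eq_of_eq_near_zero {r : ℝ} (hr : 0 < r)
    [IsProbabilityMeasure μ] [IsProbabilityMeasure ν]
    (hμ0 : ∀ᵐ x ∂μ, 0 ≤ x) (hν0 : ∀ᵐ x ∂ν, 0 ≤ x)
    (hμint : ∀ t : ℝ, t < r → Integrable (fun x : ℝ => Real.exp (t * x)) μ)
    (hνint : ∀ t : ℝ, t < r → Integrable (fun x : ℝ => Real.exp (t * x)) ν)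
    (heq : ∀ t : ℝ, |t| < r → ∫ x, Real.exp (t * x) ∂μ = ∫ x, Real.exp (t * x) ∂ν) :
    ∀ t : ℝ, 0 ≤ t →
      ∫ x, Real.exp (-(t * x)) ∂μ = ∫ x, Real.exp (-(t * x)) ∂ν := by
  set U : Set ℂ := {z : ℂ | -(r / 2) < z.re} with hU
  have hUopen : IsOpen U := isOpen_lt continuous_const Complex.continuous_re
  have hUconv : Convex ℝ U := convex_halfSpace_re_gt _
  have h0U : (0 : ℂ) ∈ U := by simp [hU]; linarith
  set Fμ : ℂ → ℂ := fun z => ∫ x, Complex.exp (-(z * x)) ∂μ with hFμ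
  set Fν : ℂ → ℂ := fun z => ∫ x, Complex.exp (-(z * x)) ∂ν with hFν
  have hreal : ∀ (m : Measure ℝ) (t : ℝ), (∫ x, Complex.exp (-((t : ℂ) * x)) ∂m)
      = ((∫ x, Real.exp (-(t * x)) ∂m : ℝ) : ℂ) := by
    intro m t
    calc ∫ x, Complex.exp (-((t : ℂ) * x)) ∂m
        = ∫ x, ((Real.exp (-(t * x)) : ℝ) : ℂ) ∂m := by
          apply integral_congr_ae
          filter_upwards with x
          rw [Complex.ofReal_exp]
          congr 1
          push_cast
          ring
      _ = ((∫ x, Real.exp (-(t * x)) ∂m : ℝ) : ℂ) := integral_ofReal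
  have hμana : AnalyticOnNhd ℂ Fμ U :=
    (differentiableOn_laplace hr hμ0 hμint).analyticOnNhd hUopen
  have hνana : AnalyticOnNhd ℂ Fν U :=
    (differentiableOn_laplace hr hν0 hνint).analyticOnNhd hUopen
  have hagree : ∀ s : ℝ, 0 < s → s < r → Fμ (s : ℂ) = Fν (s : ℂ) := by
    intro s h1 h2
    have h3 := heq (-s) (by rwa [abs_neg, abs_of_pos h1])
    simp only [neg_mul] at h3
    simp only [hFμ, hFν]
    rw [hreal μ s, hreal ν s]
    exact_mod_cast h3
  have hseq : Tendsto (fun n : ℕ => ((r / 2 / (n + 1) : ℝ) : ℂ)) atTop (𝓝[≠] (0 : ℂ)) := by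
    rw [tendsto_nhdsWithin_iff]
    constructor
    · have h1 : Tendsto (fun n : ℕ => (r / 2 / ((n : ℝ) + 1))) atTop (𝓝 0) := by
        have h2 := (tendsto_const_div_atTop_nhds_zero_nat (r / 2)).comp
          (tendsto_add_atTop_nat 1)
        convert h2 using 2 with n
        simp [Function.comp]
      have h3 := (Complex.continuous_ofReal.tendsto 0).comp h1
      rw [Complex.ofReal_zero] at h3
      exact h3
    · filter_upwards with n
      simp only [Set.mem_compl_iff, Set.mem_singleton_iff]
      have hne : (r / 2 / ((n : ℝ) + 1)) ≠ 0 := by positivity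
      exact Complex.ofReal_ne_zero.2 hne
  have hfreq : ∃ᶠ z in 𝓝[≠] (0 : ℂ), Fμ z = Fν z := by
    apply hseq.frequently
    apply Filter.Frequently.of_forall
    intro n
    apply hagree
    · positivity
    · have h1 : r / 2 / ((n : ℝ) + 1) ≤ r / 2 := by
        apply div_le_self (by linarith)
        have : (0 : ℝ) ≤ (n : ℝ) := Nat.cast_nonneg n
        linarith
      linarith
  have hEq : Set.EqOn Fμ Fν U :=
    hμana.eqOn_of_preconnected_of_frequently_eq hνana hUconv.isPreconnected h0U hfreq
  intro t ht
  have htU : (t : ℂ) ∈ U := by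
    simp only [hU, Set.mem_setOf_eq, Complex.ofReal_re]
    linarith
  have hEqt := hEq htU
  simp only [hFμ, hFν] at hEqt
  rw [hreal μ t, hreal ν t] at hEqt
  exact_mod_cast hEqt

end Complex

section Compact
open scoped NNReal ENNReal

lemma integrable_of_ae_bound {P : Measure ℝ} [IsProbabilityMeasure P] {f : ℝ → ℝ}
    (hf : Continuous f) {M : ℝ} (hM : ∀ᵐ x ∂P, |f x| ≤ M) : Integrable f P := by
  apply Integrable.mono' (integrable_const M) hf.aestronglyMeasurable
  filter_upwards [hM] with x hx
  rwa [Real.norm_eq_abs]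

lemma integrable_pow_of_Icc {P : Measure ℝ} [IsProbabilityMeasure P]
    (hP : ∀ᵐ x ∂P, x ∈ Set.Icc (0 : ℝ) 1) (n : ℕ) :
    Integrable (fun x : ℝ => x ^ n) P := by
  apply integrable_of_ae_bound (continuous_pow n) (M := 1)
  filter_upwards [hP] with x hx
  rw [abs_pow]
  exact pow_le_one₀ (abs_nonneg x) (abs_le.2 ⟨by linarith [hx.1], hx.2⟩)

lemma integral_poly_eq_of_moments {P Q : Measure ℝ} [IsProbabilityMeasure P]
    [IsProbabilityMeasure Q]
    (hP : ∀ᵐ x ∂P, x ∈ Set.Icc (0 : ℝ) 1) (hQ : ∀ᵐ x ∂Q, x ∈ Set.Icc (0 : ℝ) 1)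
    (h : ∀ n : ℕ, ∫ x, x ^ n ∂P = ∫ x, x ^ n ∂Q) (p : Polynomial ℝ) :
    ∫ x, p.eval x ∂P = ∫ x, p.eval x ∂Q := by
  have key : ∀ (m : Measure ℝ) [IsProbabilityMeasure m], (∀ᵐ x ∂m, x ∈ Set.Icc (0 : ℝ) 1) →
      ∫ x, p.eval x ∂m
        = ∑ i ∈ Finset.range (p.natDegree + 1), p.coeff i * ∫ x, x ^ i ∂m := by
    intro m _ hm
    calc ∫ x, p.eval x ∂m
        = ∫ x, ∑ i ∈ Finset.range (p.natDegree + 1), p.coeff i * x ^ i ∂m := by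
          apply integral_congr_ae
          filter_upwards with x
          exact Polynomial.eval_eq_sum_range x
      _ = ∑ i ∈ Finset.range (p.natDegree + 1), ∫ x, p.coeff i * x ^ i ∂m :=
          integral_finset_sum _ fun i _ => (integrable_pow_of_Icc hm i).const_mul _
      _ = ∑ i ∈ Finset.range (p.natDegree + 1), p.coeff i * ∫ x, x ^ i ∂m :=
          Finset.sum_congr rfl fun i _ => integral_const_mul _ _
  rw [key P hP, key Q hQ]
  exact Finset.sum_congr rfl fun i _ => by rw [h i]

lemma integral_eq_of_moments_Icc {P Q : Measure ℝ} [IsProbabilityMeasure P]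
    [IsProbabilityMeasure Q]
    (hP : ∀ᵐ x ∂P, x ∈ Set.Icc (0 : ℝ) 1) (hQ : ∀ᵐ x ∂Q, x ∈ Set.Icc (0 : ℝ) 1)
    (h : ∀ n : ℕ, ∫ x, x ^ n ∂P = ∫ x, x ^ n ∂Q)
    {f : ℝ → ℝ} (hf : Continuous f) {M : ℝ} (hM : ∀ x, |f x| ≤ M) :
    ∫ x, f x ∂P = ∫ x, f x ∂Q := by
  have hfint : ∀ (m : Measure ℝ) [IsProbabilityMeasure m], Integrable f m :=
    fun m _ => integrable_of_ae_bound hf (Filter.Eventually.of_forall hM)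
  have key : ∀ ε : ℝ, 0 < ε → |(∫ x, f x ∂P) - ∫ x, f x ∂Q| ≤ 2 * ε := by
    intro ε hε
    obtain ⟨p, hp⟩ := exists_polynomial_near_of_continuousOn 0 1 f hf.continuousOn ε hε
    have hpint : ∀ (m : Measure ℝ) [IsProbabilityMeasure m],
        (∀ᵐ x ∂m, x ∈ Set.Icc (0 : ℝ) 1) → Integrable (fun x => p.eval x) m := by
      intro m _ hm
      apply integrable_of_ae_bound p.continuous_aeval (M := M + ε)
      filter_upwards [hm] with x hx
      calc |p.eval x| = |(p.eval x - f x) + f x| := by ring_nf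
        _ ≤ |p.eval x - f x| + |f x| := abs_add_le _ _
        _ ≤ M + ε := by linarith [(hp x hx).le, hM x]
    have hdiff : ∀ (m : Measure ℝ) [IsProbabilityMeasure m], (∀ᵐ x ∂m, x ∈ Set.Icc (0 : ℝ) 1) →
        |(∫ x, f x ∂m) - ∫ x, p.eval x ∂m| ≤ ε := by
      intro m _ hm
      rw [← integral_sub (hfint m) (hpint m hm)]
      have hb : ∀ᵐ x ∂m, ‖f x - p.eval x‖ ≤ ε := by
        filter_upwards [hm] with x hx
        rw [Real.norm_eq_abs, abs_sub_comm]
        exact (hp x hx).le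
      have := norm_integral_le_of_norm_le_const (μ := m) hb
      simpa using this
    have hmid := integral_poly_eq_of_moments hP hQ h p
    have hsplit : (∫ x, f x ∂P) - ∫ x, f x ∂Q
        = ((∫ x, f x ∂P) - ∫ x, p.eval x ∂P) + ((∫ x, p.eval x ∂Q) - ∫ x, f x ∂Q) := by
      rw [hmid]; ring
    rw [hsplit]
    calc |((∫ x, f x ∂P) - ∫ x, p.eval x ∂P) + ((∫ x, p.eval x ∂Q) - ∫ x, f x ∂Q)|
        ≤ |(∫ x, f x ∂P) - ∫ x, p.eval x ∂P| + |(∫ x, p.eval x ∂Q) - ∫ x, f x ∂Q| :=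
          abs_add_le _ _
      _ ≤ 2 * ε := by
          have h1 := hdiff P hP
          have h2 := hdiff Q hQ
          rw [abs_sub_comm] at h2
          linarith
  by_contra hne
  have hd : 0 < |(∫ x, f x ∂P) - ∫ x, f x ∂Q| := abs_pos.2 (sub_ne_zero.2 hne)
  have := key (|(∫ x, f x ∂P) - ∫ x, f x ∂Q| / 4) (by positivity)
  linarith

lemma measure_eq_of_moments_Icc {P Q : Measure ℝ} [IsProbabilityMeasure P]
    [IsProbabilityMeasure Q]
    (hP : ∀ᵐ x ∂P, x ∈ Set.Icc (0 : ℝ) 1) (hQ : ∀ᵐ x ∂Q, x ∈ Set.Icc (0 : ℝ) 1)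
    (h : ∀ n : ℕ, ∫ x, x ^ n ∂P = ∫ x, x ^ n ∂Q) : P = Q := by
  apply ext_of_forall_lintegral_eq_of_IsFiniteMeasure
  intro f
  obtain ⟨Cb, hCb⟩ := f.bounded
  have hgc : Continuous fun x : ℝ => (f x : ℝ) := NNReal.continuous_coe.comp f.continuous
  have hgM : ∀ x : ℝ, |(f x : ℝ)| ≤ (f 0 : ℝ) + Cb := by
    intro x
    have h1 := hCb x 0
    rw [NNReal.dist_eq] at h1
    have h2 := abs_le.1 h1
    rw [abs_of_nonneg (f x).coe_nonneg]
    linarith [h2.2]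
  have hgint : ∀ (m : Measure ℝ) [IsProbabilityMeasure m],
      Integrable (fun x : ℝ => (f x : ℝ)) m :=
    fun m _ => integrable_of_ae_bound hgc (Filter.Eventually.of_forall hgM)
  rw [lintegral_coe_eq_integral f (hgint P), lintegral_coe_eq_integral f (hgint Q),
    integral_eq_of_moments_Icc hP hQ h hgc hgM]

end Compact

section Assembly
open Real

theorem measure_ext_of_moments (μ ν : Measure ℝ) [IsProbabilityMeasure μ]
    [IsProbabilityMeasure ν]
    (hμ0 : μ (Set.Iio 0) = 0) (hν0 : ν (Set.Iio 0) = 0)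
    (hμint : ∀ k : ℕ, Integrable (fun x : ℝ => x ^ k) μ)
    (hνint : ∀ k : ℕ, Integrable (fun x : ℝ => x ^ k) ν)
    {C : ℝ} (hC : 0 < C)
    (hμb : ∀ k : ℕ, ∫ x, x ^ k ∂μ ≤ C ^ k * k.factorial)
    (heq : ∀ k : ℕ, ∫ x, x ^ k ∂μ = ∫ x, x ^ k ∂ν) : μ = ν := by
  have hνb : ∀ k : ℕ, ∫ x, x ^ k ∂ν ≤ C ^ k * k.factorial := fun k => (heq k) ▸ hμb k
  have hμae : ∀ᵐ x ∂μ, 0 ≤ x := ae_nonneg_of_Iio hμ0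
  have hνae : ∀ᵐ x ∂ν, 0 ≤ x := ae_nonneg_of_Iio hν0
  set r : ℝ := 1 / (2 * C) with hrdef
  have hr : 0 < r := by positivity
  have hμexp : ∀ t : ℝ, t < r → Integrable (fun x : ℝ => Real.exp (t * x)) μ :=
    fun t ht => integrable_exp_mul hμae hμint hC hμb ht
  have hνexp : ∀ t : ℝ, t < r → Integrable (fun x : ℝ => Real.exp (t * x)) ν :=
    fun t ht => integrable_exp_mul hνae hνint hC hνb ht
  have hLeq : ∀ t : ℝ, |t| < r →
      ∫ x, Real.exp (t * x) ∂μ = ∫ x, Real.exp (t * x) ∂ν := by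
    intro t ht
    rw [integral_exp_mul_eq_tsum hμae hμint hC hμb ht,
      integral_exp_mul_eq_tsum hνae hνint hC hνb ht]
    exact tsum_congr fun k => by rw [heq k]
  have hlap := laplace_eq_of_eq_near_zero hr hμae hνae hμexp hνexp hLeq
  -- push forward under x ↦ exp (-x)
  set g : ℝ → ℝ := fun x => Real.exp (-x) with hgdef
  have hgc : Continuous g := Real.continuous_exp.comp continuous_neg
  have hginj : Function.Injective g := by
    intro a b hab
    have := congrArg Real.log hab
    simpa [hgdef, Real.log_exp] using this
  have hgme : MeasurableEmbedding g := hgc.measurableEmbedding hginj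
  have haeIcc : ∀ (m : Measure ℝ), (∀ᵐ x ∂m, 0 ≤ x) →
      ∀ᵐ y ∂(Measure.map g m), y ∈ Set.Icc (0 : ℝ) 1 := by
    intro m hm
    refine (ae_map_iff hgc.measurable.aemeasurable
      (measurableSet_Icc (a := (0:ℝ)) (b := 1))).2 ?_
    filter_upwards [hm] with x hx
    constructor
    · exact (Real.exp_pos _).le
    · exact Real.exp_le_one_iff.2 (by linarith)
  have hmom : ∀ n : ℕ, ∫ y, y ^ n ∂(Measure.map g μ) = ∫ y, y ^ n ∂(Measure.map g ν) := by
    intro n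
    have hkey : ∀ (m : Measure ℝ), ∫ y, y ^ n ∂(Measure.map g m)
        = ∫ x, Real.exp (-((n : ℝ) * x)) ∂m := by
      intro m
      rw [integral_map hgc.measurable.aemeasurable (continuous_pow n).aestronglyMeasurable]
      apply integral_congr_ae
      filter_upwards with x
      rw [hgdef]
      rw [← Real.exp_nat_mul]
      congr 1
      ring
    rw [hkey μ, hkey ν]
    exact hlap (n : ℝ) (Nat.cast_nonneg n)
  have : IsProbabilityMeasure (Measure.map g μ) :=
    Measure.isProbabilityMeasure_map hgc.measurable.aemeasurable
  have : IsProbabilityMeasure (Measure.map g ν) :=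
    Measure.isProbabilityMeasure_map hgc.measurable.aemeasurable
  have hmapeq : Measure.map g μ = Measure.map g ν :=
    measure_eq_of_moments_Icc (haeIcc μ hμae) (haeIcc ν hνae) hmom
  apply Measure.ext
  intro s hs
  have h1 : μ s = Measure.map g μ (g '' s) := by
    rw [hgme.map_apply, Set.preimage_image_eq s hginj]
  have h2 : ν s = Measure.map g ν (g '' s) := by
    rw [hgme.map_apply, Set.preimage_image_eq s hginj]
  rw [h1, h2, hmapeq]

end Assembly

/-- the moment sequence `(a_k)_{k ≥ 1}` of `T(c,δ)` determines a unique Borel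
probability measure on the nonnegative real line. -/
theorem truncated_moments_determine_measure
    (c δ : ℝ) (hc : 1 / 2 < c) (hδ : 0 < δ)
    (μ ν : Measure ℝ) [IsProbabilityMeasure μ] [IsProbabilityMeasure ν]
    (hμ0 : μ (Set.Iio 0) = 0) (hν0 : ν (Set.Iio 0) = 0)
    (hμint : ∀ k : ℕ, 1 ≤ k → Integrable (fun x : ℝ => x ^ k) μ)
    (hνint : ∀ k : ℕ, 1 ≤ k → Integrable (fun x : ℝ => x ^ k) ν)
    (hμ : ∀ k : ℕ, 1 ≤ k → ∫ x, x ^ k ∂μ = truncMoment c δ k)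
    (hν : ∀ k : ℕ, 1 ≤ k → ∫ x, x ^ k ∂ν = truncMoment c δ k) :
    μ = ν := by
  set E : ℝ := Real.exp 1 * (2 * (max 1 δ * δ ^ (-(2 * c)) * max 1 (1 / (2 * c - 1)))) with hEdef
  have hE : 0 < E := by
    have h1 : (0:ℝ) < max 1 δ := lt_max_of_lt_left one_pos
    have h2 : (0:ℝ) < δ ^ (-(2 * c)) := Real.rpow_pos_of_pos hδ _
    have h3 : (0:ℝ) < max 1 (1 / (2 * c - 1)) := lt_max_of_lt_left one_pos
    have h4 : (0:ℝ) < Real.exp 1 := Real.exp_pos 1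
    positivity
  set C : ℝ := max 1 E with hCdef
  have hC : 0 < C := lt_of_lt_of_le one_pos (le_max_left _ _)
  have hint : ∀ (m : Measure ℝ) [IsProbabilityMeasure m],
      (∀ k : ℕ, 1 ≤ k → Integrable (fun x : ℝ => x ^ k) m) →
      ∀ k : ℕ, Integrable (fun x : ℝ => x ^ k) m := by
    intro m _ hm k
    cases k with
    | zero => simpa using integrable_const (1 : ℝ)
    | succ n => exact hm (n + 1) (Nat.succ_le_succ (Nat.zero_le n))
  have hmom0 : ∀ (m : Measure ℝ) [IsProbabilityMeasure m], ∫ x : ℝ, x ^ 0 ∂m = 1 := by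
    intro m _
    simp
  have hbound : ∀ (m : Measure ℝ) [IsProbabilityMeasure m],
      (∀ k : ℕ, 1 ≤ k → ∫ x, x ^ k ∂m = truncMoment c δ k) →
      ∀ k : ℕ, ∫ x, x ^ k ∂m ≤ C ^ k * k.factorial := by
    intro m _ hm k
    cases k with
    | zero => rw [hmom0 m]; simp
    | succ n =>
      rw [hm (n + 1) (Nat.succ_le_succ (Nat.zero_le n))]
      calc truncMoment c δ (n + 1) ≤ E ^ (n + 1) * (n + 1).factorial :=
            truncMoment_le_factorial hc hδ (n + 1)
        _ ≤ C ^ (n + 1) * (n + 1).factorial := by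
            apply mul_le_mul_of_nonneg_right _ (by positivity)
            exact pow_le_pow_left₀ hE.le (le_max_right _ _) _
  apply measure_ext_of_moments μ ν hμ0 hν0 (hint μ hμint) (hint ν hνint) hC (hbound μ hμ)
  intro k
  cases k with
  | zero => rw [hmom0 μ, hmom0 ν]
  | succ n =>
    rw [hμ (n + 1) (Nat.succ_le_succ (Nat.zero_le n)),
      hν (n + 1) (Nat.succ_le_succ (Nat.zero_le n))]
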